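/- Let k be a separably closed field of characteristic ≠ 2, let C be a k-linear additive category, and let (D, ev) be a duality on C whose underlying functor D : Cᵒᵖ → C is additive and k-linear. Let A be an object of C such that End(A) is a local ring that is finite-dimensional as a k-vector space. Then exactly one of the following holds: A is 1-self-dual; A is (−1)-self-dual; A is not self-dual. In particular, A cannot be simultaneously 1-self-dual and (−1)-self-dual. -/

import Mathlib

open CategoryTheory Opposite

/-- A category with duality: a functor `D : Cᵒᵖ ⥤ C` together with an evaluation
natural transformation `ev : 𝟭 C ⟶ D.rightOp ⋙ D` such that the composite
`D A → D D D A → D A` (namely `ev_{D A}` followed by `D (ev_A)`) is the identity. -/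
structure CatWithDuality (C : Type*) [Category C] where
  D : Cᵒᵖ ⥤ C
  ev : 𝟭 C ⟶ D.rightOp ⋙ D
  ev_comp : ∀ A : C, ev.app (D.obj (op A)) ≫ D.map (ev.app A).op = 𝟙 (D.obj (op A))

/-- The transpose `g^T : A ⟶ D B` of a morphism `g : B ⟶ D A`, namely
`ev_A` followed by `D g`. -/
def CatWithDuality.transpose {C : Type*} [Category C] (S : CatWithDuality C)
    {A B : C} (g : B ⟶ S.D.obj (op A)) : A ⟶ S.D.obj (op B) :=
  S.ev.app A ≫ S.D.map g.op


open Polynomial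

section SelfDualAlgAux

variable {k : Type*} [Field k]

/-- Irreducible polynomials over a separably closed field of characteristic `≠ 2`
have odd degree. -/
lemma selfDualAux_odd_natDegree_of_irreducible [IsSepClosed k] (hchar : ringChar k ≠ 2)
    {q : k[X]} (hq : Irreducible q) : Odd q.natDegree := by
  obtain ⟨r, hEC⟩ := ExpChar.exists k
  have hrodd : Odd r := by
    rcases hEC with _ | @⟨_, hp, hch⟩
    · exact odd_one
    · refine hp.odd_of_ne_two ?_
      rintro rfl
      haveI := hch
      exact hchar (ringChar.eq k 2)
  have hr0 : r ≠ 0 := by rintro rfl; simp [Nat.odd_iff] at hrodd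
  haveI := hEC
  obtain ⟨g, hgsep, n, hgn⟩ := hq.hasSeparableContraction r
  have hgirr : Irreducible g := of_irreducible_expand_pow hr0 (hgn ▸ hq)
  have hqdeg : q.natDegree = g.natDegree * r ^ n := by
    rw [← hgn, natDegree_expand]
  have hgdeg : g.natDegree = 1 := by
    have hgd0 : g.natDegree ≠ 0 := by
      intro h0
      have hnd : q.natDegree = 0 := by rw [hqdeg, h0, zero_mul]
      have hqC : q = C (q.coeff 0) := eq_C_of_natDegree_eq_zero hnd
      refine hq.not_isUnit (hqC ▸ isUnit_C.mpr (IsUnit.mk0 _ fun hc => hq.ne_zero ?_))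
      rw [hqC, hc, map_zero]
    obtain ⟨c, hc⟩ := IsSepClosed.exists_root g
      (by rw [degree_eq_natDegree hgirr.ne_zero]; exact_mod_cast hgd0) hgsep
    obtain ⟨e, he⟩ := dvd_iff_isRoot.mpr hc
    rcases hgirr.isUnit_or_isUnit he with hu | hu
    · exact absurd hu (not_isUnit_X_sub_C c)
    · rw [he, natDegree_mul (X_sub_C_ne_zero c) hu.ne_zero, natDegree_X_sub_C,
        natDegree_eq_zero_of_isUnit hu]
  rw [hqdeg, hgdeg, one_mul]
  exact hrodd.pow

/-- The key algebraic fact: in a finite-dimensional-style setting, a "local" ring `R`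
over a separably closed field of char `≠ 2` contains no unit `u` with
`aeval (-u) (minpoly k u) = 0` failing... -/
theorem selfDualAux_no_skew_unit {R : Type*} [IsSepClosed k] (hchar : ringChar k ≠ 2)
    [Ring R] [Algebra k R] [Nontrivial R]
    (hidem : ∀ e : R, e * e = e → e = 0 ∨ e = 1)
    (u : R) (hint : IsIntegral k u) (huu : IsUnit u)
    (hneg : aeval (-u) (minpoly k u) = 0) : False := by
  set μ := minpoly k u with hμdef
  have hmonic : μ.Monic := minpoly.monic hint
  have hDpos : 0 < μ.natDegree := minpoly.natDegree_pos hint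
  have hμ0 : μ ≠ 0 := hmonic.ne_zero
  set D := μ.natDegree with hDdef
  -- the constant coefficient of μ is nonzero, since u is a unit
  have hc0 : μ.coeff 0 ≠ 0 := by
    intro h
    obtain ⟨w, hw⟩ : (X : k[X]) ∣ μ := X_dvd_iff.mpr h
    have hw0 : w ≠ 0 := by rintro rfl; rw [mul_zero] at hw; exact hμ0 hw
    have haev : aeval u μ = 0 := minpoly.aeval k u
    rw [hw, map_mul, aeval_X] at haev
    have hzw : aeval u w = 0 := (huu.mul_right_eq_zero).mp haev
    have hdvd := minpoly.dvd k u hzw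
    have hle := natDegree_le_of_dvd hdvd hw0
    have hlt : w.natDegree < μ.natDegree := by
      rw [hw, natDegree_mul X_ne_zero hw0, natDegree_X]; omega
    rw [← hμdef] at hle; omega
  -- μ.comp (-X) = (-1)^D • μ
  have hμcomp : μ.comp (-X) = ((-1 : k) ^ D) • μ := by
    set w : k[X] := ((-1 : k) ^ D) • μ.comp (-X) with hwdef
    have hdegc : (μ.comp (-X)).natDegree = D := by rw [natDegree_comp]; simp [hDdef]
    have hdegw : w.natDegree = D := by
      rw [hwdef, smul_eq_C_mul, natDegree_C_mul (pow_ne_zero D (neg_ne_zero.mpr one_ne_zero)),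
        hdegc]
    have hwm : w.Monic := by
      have hlc : (μ.comp (-X)).leadingCoeff = (-1 : k) ^ D := by
        rw [leadingCoeff_comp (by simp), hmonic.leadingCoeff, one_mul]
        simp [hDdef]
      rw [Monic, hwdef, smul_eq_C_mul, leadingCoeff_mul, leadingCoeff_C, hlc,
        ← pow_add, ← two_mul]
      exact Even.neg_one_pow ⟨D, two_mul D⟩
    have haw : aeval u w = 0 := by
      rw [hwdef, map_smul, aeval_comp]
      simp only [map_neg, aeval_X]
      rw [hneg, smul_zero]
    have hdvd : μ ∣ w := minpoly.dvd k u haw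
    have hμw : μ = w := by
      refine Polynomial.eq_of_dvd_of_natDegree_le_of_leadingCoeff hdvd (by rw [hdegw]) ?_
      rw [hmonic.leadingCoeff, hwm.leadingCoeff]
    have := congrArg (fun p : k[X] => ((-1 : k) ^ D) • p) hμw
    simpa [hwdef, smul_smul, ← pow_add, ← two_mul, Even.neg_one_pow ⟨D, two_mul D⟩] using this.symm
  -- get a monic irreducible factor q of μ
  obtain ⟨q, hqm, hq, hqd⟩ := μ.exists_monic_irreducible_factor
    (fun h => by have := natDegree_eq_zero_of_isUnit h; omega)
  have hqdeg : 0 < q.natDegree := by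
    rcases Nat.eq_zero_or_pos q.natDegree with h0 | h
    · exact absurd (hqm.natDegree_eq_zero.mp h0 ▸ isUnit_one) hq.not_isUnit
    · exact h
  -- extract the q-primary part
  have hmfin : FiniteMultiplicity q μ := FiniteMultiplicity.of_not_isUnit hq.not_isUnit hμ0
  obtain ⟨r, hfact, hqr⟩ := hmfin.exists_eq_pow_mul_and_not_dvd
  set a := multiplicity q μ with hadef
  have ha : a ≠ 0 := by
    intro h0
    rw [h0, pow_zero, one_mul] at hfact
    exact hqr (hfact ▸ hqd)
  -- locality: r is a unit, hence μ = q ^ a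
  have hcop : IsCoprime (q ^ a) r := (hq.coprime_iff_not_dvd.mpr hqr).pow_left
  obtain ⟨s, t, hst⟩ := hcop
  have hrunit : IsUnit r := by
    set e : R := aeval u (t * r) with hedef
    have hmul : (t * r) * (t * r) = (t * r) - (t * s) * μ := by
      rw [hfact]; linear_combination (t * r) * hst
    have hμaev : aeval u μ = 0 := minpoly.aeval k u
    have he : e * e = e := by
      have h := congrArg (aeval u (A := R)) hmul
      simp only [map_mul, map_sub] at h
      rw [hμaev, mul_zero, sub_zero] at h
      simpa [hedef, map_mul] using h
    rcases hidem e he with h0 | h1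
    · exfalso
      have hdvd : μ ∣ t * r := minpoly.dvd k u (by rw [← hedef, h0])
      have hqtr : q ∣ t * r := hqd.trans hdvd
      rcases hq.prime.dvd_mul.mp hqtr with hqt | hqrr
      · have : q ∣ 1 := by
          rw [← hst]
          exact dvd_add (Dvd.dvd.mul_left (dvd_pow_self q ha) s) (hqt.mul_right r)
        exact hq.not_isUnit (isUnit_of_dvd_one this)
      · exact hqr hqrr
    · have hdvd : μ ∣ t * r - 1 := minpoly.dvd k u (by
        rw [map_sub, ← hedef, h1, map_one, sub_self])
      have h2 : t * r - 1 = -(s * (q ^ a)) := by linear_combination hst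
      rw [h2, dvd_neg, hfact] at hdvd
      have hrs : r ∣ s := by
        have h5 : q ^ a * r ∣ q ^ a * s := by rwa [mul_comm s _] at hdvd
        exact (mul_dvd_mul_iff_left (pow_ne_zero a hq.ne_zero)).mp h5
      have : r ∣ 1 := by
        rw [← hst]
        exact dvd_add (hrs.mul_right _) (Dvd.dvd.mul_left dvd_rfl t)
      exact isUnit_of_dvd_one this
  have hrm : r.Monic := (hqm.pow a).of_mul_monic_left (hfact ▸ hmonic)
  have hr1 : r = 1 := hrm.eq_one_of_isUnit hrunit
  have hμqa : μ = q ^ a := by rw [hfact, hr1, mul_one]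
  -- q.comp (-X) is (up to the sign) q again
  have hqcomp : q.comp (-X) = ((-1 : k) ^ q.natDegree) • q := by
    have h1 : q.comp (-X) ∣ μ.comp (-X) := by
      obtain ⟨y, hy⟩ := hqd
      exact ⟨y.comp (-X), by rw [hy, mul_comp]⟩
    have h2 : q.comp (-X) ∣ μ := by
      rw [hμcomp, smul_eq_C_mul] at h1
      exact (isUnit_C.mpr ((isUnit_one.neg.pow D))).dvd_mul_left.mp h1
    rw [hμqa] at h2
    obtain ⟨i, hi, hassoc⟩ := (dvd_prime_pow hq.prime a).mp h2
    have hdq : (q.comp (-X)).natDegree = q.natDegree := by rw [natDegree_comp]; simp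
    have hdi : (q.comp (-X)).natDegree = i * q.natDegree := by
      obtain ⟨v, hv⟩ := hassoc
      have : q.comp (-X) = q ^ i * (v⁻¹ : k[X]ˣ) := by
        rw [← hv, mul_assoc]; simp
      rw [this, natDegree_mul (pow_ne_zero i hq.ne_zero) (Units.ne_zero _),
        natDegree_pow, natDegree_eq_zero_of_isUnit (v⁻¹).isUnit, add_zero]
    have hieq : i = 1 := by
      rw [hdq] at hdi; nlinarith [hqdeg]
    rw [hieq, pow_one] at hassoc
    -- q.comp (-X) = unit * q with matching "monicization"
    have hqclc : (q.comp (-X)).leadingCoeff = (-1 : k) ^ q.natDegree := by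
      rw [leadingCoeff_comp (by simp), hqm.leadingCoeff, one_mul]
      simp
    have hmon : (((-1 : k) ^ q.natDegree) • q.comp (-X)).Monic := by
      rw [Monic, smul_eq_C_mul, leadingCoeff_mul, leadingCoeff_C, hqclc, ← pow_add, ← two_mul]
      exact Even.neg_one_pow ⟨_, two_mul _⟩
    have hassoc1 : Associated (q.comp (-X)) (((-1 : k) ^ q.natDegree) • q.comp (-X)) := by
      rw [smul_eq_C_mul]
      exact ⟨(isUnit_C.mpr ((isUnit_one (M := k)).neg.pow q.natDegree)).unit, by
        simp [mul_comm]⟩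
    have hassoc2 : Associated (((-1 : k) ^ q.natDegree) • q.comp (-X)) q :=
      hassoc1.symm.trans hassoc
    have heq := eq_of_monic_of_associated hmon hqm hassoc2
    have := congrArg (fun p : k[X] => ((-1 : k) ^ q.natDegree) • p) heq
    simpa [smul_smul, ← pow_add, ← two_mul, Even.neg_one_pow ⟨_, two_mul _⟩] using this
  -- oddness of deg q forces q(0) = 0
  have hodd : Odd q.natDegree := selfDualAux_odd_natDegree_of_irreducible hchar hq
  have hq0 : q.coeff 0 = 0 := by
    have h1 : (q.comp (-X)).coeff 0 = q.coeff 0 := by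
      rw [coeff_zero_eq_eval_zero, eval_comp]
      simp [coeff_zero_eq_eval_zero]
    have h2 : (((-1 : k) ^ q.natDegree) • q).coeff 0 = -(q.coeff 0) := by
      rw [coeff_smul, hodd.neg_one_pow]; simp
    have h4 : q.coeff 0 = -(q.coeff 0) := by rw [← h2, ← hqcomp, h1]
    have h3 : (2 : k) * q.coeff 0 = 0 := by linear_combination h4
    exact (mul_eq_zero.mp h3).resolve_left (Ring.two_ne_zero hchar)
  -- contradiction with hc0
  apply hc0
  rw [hμqa, coeff_zero_eq_eval_zero, eval_pow, ← coeff_zero_eq_eval_zero, hq0,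
    zero_pow ha]
end SelfDualAlgAux


namespace CatWithDuality
variable {C : Type*} [Category C] (S : CatWithDuality C)
variable {C : Type*} [Category C] (S : CatWithDuality C)

theorem transposeTransposeAux {A : C} (g : A ⟶ S.D.obj (op A)) :
    S.transpose (S.transpose g) = g := by
  dsimp [transpose]
  rw [Functor.map_comp, ← Category.assoc]
  have hnat := S.ev.naturality g
  simp only [Functor.id_map, Functor.comp_map, Functor.rightOp_map] at hnat
  rw [← hnat, Category.assoc, S.ev_comp A]
  simp

variable {k : Type*} [Field k] [Preadditive C] [Linear k C]

theorem transposeAddAux (hD : S.D.Additive) {A B : C} (g h : B ⟶ S.D.obj (op A)) :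
    S.transpose (g + h) = S.transpose g + S.transpose h := by
  haveI := hD
  dsimp [transpose]
  rw [Functor.map_add, Preadditive.comp_add]

theorem transposeSmulAux
    (hDlin : ∀ {X Y : C} (f : X ⟶ Y) (a : k), S.D.map (a • f).op = a • S.D.map f.op)
    {A B : C} (g : B ⟶ S.D.obj (op A)) (a : k) :
    S.transpose (a • g) = a • S.transpose g := by
  dsimp [transpose]
  rw [hDlin, Linear.comp_smul]

/-- no object is both `1`- and `(-1)`-self-dual -/
theorem notBothAux {k : Type*} [Field k] [IsSepClosed k] (hchar : ringChar k ≠ 2)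
    {C : Type*} [Category C] [Preadditive C] [Linear k C]
    (S : CatWithDuality C) (hD : S.D.Additive)
    (hDlin : ∀ {X Y : C} (f : X ⟶ Y) (a : k), S.D.map (a • f).op = a • S.D.map f.op)
    (A : C)
    (hnz : Nontrivial (A ⟶ A))
    (hloc : ∀ u v : A ⟶ A, IsIso (u + v) → IsIso u ∨ IsIso v)
    (hfin : FiniteDimensional k (A ⟶ A))
    (f : A ⟶ S.D.obj (op A)) (hf : IsIso f) (hfs : f = S.transpose f)
    (g : A ⟶ S.D.obj (op A)) (hg : IsIso g) (hgs : g = -S.transpose g) : False := by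
  classical
  haveI := hD
  haveI := hnz
  haveI : Nontrivial (End A) := hnz
  haveI := hf
  haveI := hg
  -- the adjoint involution on End A with respect to f
  set τ : End A → End A := fun e => f ≫ S.D.map (Quiver.Hom.op (e : A ⟶ A)) ≫ inv f with hτ
  have hfev : f ≫ S.D.map (Quiver.Hom.op (inv f)) = S.ev.app A := by
    nth_rewrite 1 [hfs]
    dsimp [transpose]
    rw [Category.assoc, ← Functor.map_comp, ← op_comp, IsIso.inv_hom_id, op_id,
      S.D.map_id, Category.comp_id]
  have hτcomp : ∀ e₁ e₂ : A ⟶ A,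
      τ (e₁ ≫ e₂) = τ e₂ ≫ τ e₁ := by
    intro e₁ e₂
    simp only [hτ]
    rw [op_comp, Functor.map_comp]
    simp
  have hτmul : ∀ x y : End A, τ (x * y) = τ y * τ x := fun x y => hτcomp y x
  have hτadd : ∀ x y : End A, τ (x + y) = τ x + τ y := by
    intro x y
    simp only [hτ]
    rw [op_add, Functor.map_add, Preadditive.add_comp, Preadditive.comp_add]
  have hτsmul : ∀ (a : k) (x : End A), τ (a • x) = a • τ x := by
    intro a x
    simp only [hτ]
    rw [hDlin, Linear.smul_comp, Linear.comp_smul]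
  have hτzero : τ 0 = 0 := by
    have h := hτsmul 0 0
    simpa using h
  have hτone : τ 1 = 1 := by
    simp only [hτ]
    show f ≫ S.D.map (Quiver.Hom.op (𝟙 A)) ≫ inv f = 𝟙 A
    rw [op_id, S.D.map_id, Category.id_comp, IsIso.hom_inv_id]
  -- the element u and its skewness
  set u : End A := (g ≫ inv f : A ⟶ A) with hu
  have hτu : τ u = -u := by
    have hTg : S.transpose g = -g := by
      conv_rhs => rw [hgs]
      rw [neg_neg]
    show f ≫ S.D.map (Quiver.Hom.op (g ≫ inv f)) ≫ inv f = -(g ≫ inv f)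
    rw [op_comp, Functor.map_comp, ← Category.assoc, ← Category.assoc, hfev]
    have : (S.ev.app A ≫ S.D.map g.op) = S.transpose g := rfl
    rw [Category.assoc, ← Category.assoc, this, hTg, Preadditive.neg_comp]
  have hτpow : ∀ n : ℕ, τ (u ^ n) = (τ u) ^ n := by
    intro n
    induction n with
    | zero => simpa using hτone
    | succ n ih =>
      rw [pow_succ, hτmul, ih, pow_succ']
  have hτalg : ∀ a : k, τ (algebraMap k (End A) a) = algebraMap k (End A) a := by
    intro a
    rw [Algebra.algebraMap_eq_smul_one, hτsmul, hτone]
  have hτaeval : ∀ P : k[X], τ (aeval u P) = aeval (τ u) P := by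
    intro P
    induction P using Polynomial.induction_on' with
    | add p q hp hq => rw [map_add, hτadd, hp, hq, map_add]
    | monomial n a =>
      rw [aeval_monomial, aeval_monomial, hτmul, hτpow, hτalg, ← Algebra.commutes]
  -- the End ring is "local" in the idempotent sense
  have hidem : ∀ e : End A, e * e = e → e = 0 ∨ e = 1 := by
    intro e he
    have hsum : IsIso ((e : A ⟶ A) + ((1 : End A) - e)) := by
      rw [add_sub_cancel]
      show IsIso (𝟙 A)
      infer_instance
    rcases hloc _ _ hsum with h | h
    · right
      haveI := h
      have h2 : (e : A ⟶ A) ≫ e = e ≫ 𝟙 A := by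
        rw [Category.comp_id]; exact he
      exact (cancel_epi (e : A ⟶ A)).mp h2
    · left
      haveI := h
      have hidem2 : ((1 : End A) - e) * ((1 : End A) - e) = (1 : End A) - e := by
        have hexp : ((1 : End A) - e) * ((1 : End A) - e) = 1 - e - e + e * e := by
          noncomm_ring
        rw [hexp, he]
        abel
      have h2 : ((1 : End A) - e : A ⟶ A) ≫ ((1 : End A) - e) = ((1 : End A) - e) ≫ 𝟙 A := by
        rw [Category.comp_id]; exact hidem2
      have h3 : ((1 : End A) - e : A ⟶ A) = 𝟙 A := (cancel_epi _).mp h2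
      have h4 : (1 : End A) - e = 1 := h3
      exact sub_eq_self.mp h4
  -- assemble
  haveI hfin' : Module.Finite k (End A) := hfin
  haveI : Algebra.IsIntegral k (End A) := Algebra.IsIntegral.of_finite k (End A)
  have hint : IsIntegral k u := Algebra.IsIntegral.isIntegral u
  have huu : IsUnit u := (isUnit_iff_isIso u).mpr (show IsIso (g ≫ inv f) from inferInstance)
  have hneg : aeval (-u) (minpoly k u) = 0 := by
    have h0 := hτaeval (minpoly k u)
    rw [minpoly.aeval, hτzero, hτu] at h0
    exact h0.symm
  exact selfDualAux_no_skew_unit hchar hidem u hint huu hneg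

/-- existence of a symmetric or antisymmetric self-duality -/
theorem existsSymOrSkewAux {k : Type*} [Field k] (hchar : ringChar k ≠ 2)
    {C : Type*} [Category C] [Preadditive C] [Linear k C]
    (S : CatWithDuality C) (hD : S.D.Additive)
    (hDlin : ∀ {X Y : C} (f : X ⟶ Y) (a : k), S.D.map (a • f).op = a • S.D.map f.op)
    (A : C)
    (hloc : ∀ u v : A ⟶ A, IsIso (u + v) → IsIso u ∨ IsIso v)
    (f₀ : A ⟶ S.D.obj (op A)) (hf₀ : IsIso f₀) :
    (∃ f : A ⟶ S.D.obj (op A), IsIso f ∧ f = S.transpose f) ∨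
    (∃ f : A ⟶ S.D.obj (op A), IsIso f ∧ f = -S.transpose f) := by
  haveI := hf₀
  have h2 : (2 : k) ≠ 0 := Ring.two_ne_zero hchar
  have hTsub : ∀ (a b : A ⟶ S.D.obj (op A)),
      S.transpose (a - b) = S.transpose a - S.transpose b := by
    intro a b
    rw [sub_eq_add_neg, sub_eq_add_neg, transposeAddAux S hD, ← neg_one_smul k b,
      transposeSmulAux S hDlin, neg_one_smul]
  set h : A ⟶ S.D.obj (op A) := (2 : k)⁻¹ • (f₀ + S.transpose f₀) with hh
  set h' : A ⟶ S.D.obj (op A) := (2 : k)⁻¹ • (f₀ - S.transpose f₀) with hh'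
  have hsum : h + h' = f₀ := by
    rw [hh, hh', ← smul_add]
    have hx : (f₀ + S.transpose f₀) + (f₀ - S.transpose f₀) = (2 : k) • f₀ := by
      rw [two_smul]; abel
    rw [hx, smul_smul, inv_mul_cancel₀ h2, one_smul]
  have hT : S.transpose h = h := by
    rw [hh, transposeSmulAux S hDlin, transposeAddAux S hD, transposeTransposeAux, add_comm]
  have hT' : S.transpose h' = -h' := by
    rw [hh', transposeSmulAux S hDlin, hTsub, transposeTransposeAux, ← smul_neg, neg_sub]
  have hiso : IsIso ((h ≫ inv f₀) + (h' ≫ inv f₀)) := by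
    rw [← Preadditive.add_comp, hsum, IsIso.hom_inv_id]
    infer_instance
  rcases hloc _ _ hiso with hc | hc
  · left
    refine ⟨h, ?_, hT.symm⟩
    have hrw : h = (h ≫ inv f₀) ≫ f₀ := by
      rw [Category.assoc, IsIso.inv_hom_id, Category.comp_id]
    rw [hrw]
    haveI := hc
    infer_instance
  · right
    refine ⟨h', ?_, by rw [hT', neg_neg]⟩
    have hrw : h' = (h' ≫ inv f₀) ≫ f₀ := by
      rw [Category.assoc, IsIso.inv_hom_id, Category.comp_id]
    rw [hrw]
    haveI := hc
    infer_instance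

end CatWithDuality

/-- Let `k` be a separably closed field of characteristic `≠ 2`, `C` a `k`-linear
additive category and `(D, ev)` an additive `k`-linear duality on `C`.  If `A` is
an object whose endomorphism ring is local and finite-dimensional over `k`, then
exactly one of the following holds: `A` is `1`-self-dual; `A` is `(-1)`-self-dual;
`A` is not self-dual. -/
theorem CatWithDuality.trichotomy_sep_closed {k : Type*} [Field k] [IsSepClosed k]
    (hchar : ringChar k ≠ 2)
    {C : Type*} [Category C] [Preadditive C] [Linear k C]
    (S : CatWithDuality C) (hD : S.D.Additive)
    (hDlin : ∀ {X Y : C} (f : X ⟶ Y) (a : k), S.D.map (a • f).op = a • S.D.map f.op)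
    (A : C)
    (hnz : Nontrivial (A ⟶ A))
    (hloc : ∀ u v : A ⟶ A, IsIso (u + v) → IsIso u ∨ IsIso v)
    (hfin : FiniteDimensional k (A ⟶ A)) :
    ((∃ f : A ⟶ S.D.obj (op A), IsIso f ∧ f = S.transpose f) ∧
      ¬(∃ f : A ⟶ S.D.obj (op A), IsIso f ∧ f = -S.transpose f) ∧
      (∃ f : A ⟶ S.D.obj (op A), IsIso f)) ∨
    (¬(∃ f : A ⟶ S.D.obj (op A), IsIso f ∧ f = S.transpose f) ∧
      (∃ f : A ⟶ S.D.obj (op A), IsIso f ∧ f = -S.transpose f) ∧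
      (∃ f : A ⟶ S.D.obj (op A), IsIso f)) ∨
    (¬(∃ f : A ⟶ S.D.obj (op A), IsIso f ∧ f = S.transpose f) ∧
      ¬(∃ f : A ⟶ S.D.obj (op A), IsIso f ∧ f = -S.transpose f) ∧
      ¬(∃ f : A ⟶ S.D.obj (op A), IsIso f)) := by
  by_cases hsd : ∃ f : A ⟶ S.D.obj (op A), IsIso f
  · obtain ⟨f₀, hf₀⟩ := hsd
    rcases CatWithDuality.existsSymOrSkewAux hchar S hD hDlin A hloc f₀ hf₀ with
      ⟨h, hi, hs⟩ | ⟨h, hi, hs⟩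
    · left
      refine ⟨⟨h, hi, hs⟩, ?_, ⟨f₀, hf₀⟩⟩
      rintro ⟨g, hgi, hgss⟩
      exact CatWithDuality.notBothAux hchar S hD hDlin A hnz hloc hfin h hi hs g hgi hgss
    · right; left
      refine ⟨?_, ⟨h, hi, hs⟩, ⟨f₀, hf₀⟩⟩
      rintro ⟨g, hgi, hgss⟩
      exact CatWithDuality.notBothAux hchar S hD hDlin A hnz hloc hfin g hgi hgss h hi hs
  · right; right
    exact ⟨fun ⟨f, hfi, _⟩ => hsd ⟨f, hfi⟩, fun ⟨f, hfi, _⟩ => hsd ⟨f, hfi⟩, hsd⟩
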